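/- Fix b ≠ 0 and let U := {(x, y) ∈ ℝ² : b⁴ + (1/2) b² x − (1/16) y² > 0}. Define the Born–Infeld Lagrangian L(x, y) := √(b⁴ + (1/2) b² x − (1/16) y²) − b² on U, and write L_F, L_{FF}, L_{FG}, L_{GG} for its partial derivatives ∂L/∂x, ∂²L/∂x², ∂²L/∂x∂y, ∂²L/∂y². Then at every point (x, y) ∈ U the three quantities Ω₁ := −L_F L_{FG} + 2x L_{FG} L_{GG} + y (L_{GG}² − L_{FG}²), Ω₂ := (L_F + 2y L_{FG})(L_{GG} − L_{FF}) + 2x (L_{FF} L_{GG} + L_{FG}²), Ω₃ := L_F L_{FG} + 2x L_{FF} L_{FG} + y (L_{FG}² − L_{FF}²) all vanish identically. -/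

import Mathlib

/-- Partial derivative with respect to the first variable F. -/
noncomputable def pderivF (L : ℝ × ℝ → ℝ) (p : ℝ × ℝ) : ℝ := fderiv ℝ L p (1, 0)

/-- Partial derivative with respect to the second variable G. -/
noncomputable def pderivG (L : ℝ × ℝ → ℝ) (p : ℝ × ℝ) : ℝ := fderiv ℝ L p (0, 1)

lemma bi_alg (b s x y A B C D : ℝ) (hs : s ≠ 0)
    (hR : s ^ 2 = b ^ 4 + (1 / 2) * b ^ 2 * x - (1 / 16) * y ^ 2)
    (hA : A = b ^ 2 / (4 * s)) (hB : B = -(b ^ 4) / (16 * s ^ 3))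
    (hC : C = b ^ 2 * y / (64 * s ^ 3)) (hD : D = -(1 / (16 * s)) - y ^ 2 / (256 * s ^ 3)) :
    (-(A * C) + 2 * x * C * D + y * (D ^ 2 - C ^ 2) = 0) ∧
    ((A + 2 * y * C) * (D - B) + 2 * x * (B * D + C ^ 2) = 0) ∧
    (A * C + 2 * x * B * C + y * (C ^ 2 - B ^ 2) = 0) := by
  subst hA hB hC hD
  refine ⟨?_, ?_, ?_⟩
  · field_simp
    linear_combination (4194304 * y * (256 * s ^ 2 + 16 * y ^ 2)) * hR
  · field_simp
    linear_combination (-2097152 * b ^ 2 * (8 * s ^ 2 + y ^ 2)) * hR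
  · field_simp
    linear_combination (16384 * b ^ 4 * y) * hR

open ContinuousLinearMap in
/-- For the Born–Infeld Lagrangian L(F,G) = √(b⁴ + b²F/2 − G²/16) − b², the three
coefficients Ω₁, Ω₂, Ω₃ of the characteristic quadratic vanish identically on the
domain where the argument of the square root is positive. -/
theorem born_infeld_exceptional (b : ℝ) (hb : b ≠ 0)
    (R : ℝ × ℝ → ℝ)
    (hR : R = fun p => b ^ 4 + (1 / 2) * b ^ 2 * p.1 - (1 / 16) * p.2 ^ 2)
    (U : Set (ℝ × ℝ)) (hU : U = {p | 0 < R p})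
    (L : ℝ × ℝ → ℝ) (hL : L = fun p => Real.sqrt (R p) - b ^ 2)
    (LF LFF LFG LGG : ℝ × ℝ → ℝ)
    (hLF : LF = pderivF L) (hLFF : LFF = pderivF (pderivF L))
    (hLFG : LFG = pderivG (pderivF L)) (hLGG : LGG = pderivG (pderivG L)) :
    ∀ p ∈ U,
      (-(LF p * LFG p) + 2 * p.1 * LFG p * LGG p + p.2 * (LGG p ^ 2 - LFG p ^ 2) = 0) ∧
      ((LF p + 2 * p.2 * LFG p) * (LGG p - LFF p) +
          2 * p.1 * (LFF p * LGG p + LFG p ^ 2) = 0) ∧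
      (LF p * LFG p + 2 * p.1 * LFF p * LFG p + p.2 * (LFG p ^ 2 - LFF p ^ 2) = 0) := by
  -- derivative of R
  have hRd : ∀ q : ℝ × ℝ, HasFDerivAt R
      (((1/2) * b^2) • (fst ℝ ℝ ℝ) + (-(1/8) * q.2) • (snd ℝ ℝ ℝ)) q := by
    intro q
    have h1 : HasFDerivAt (fun p : ℝ × ℝ => p.1) (fst ℝ ℝ ℝ) q := hasFDerivAt_fst
    have h2 : HasFDerivAt (fun p : ℝ × ℝ => p.2) (snd ℝ ℝ ℝ) q := hasFDerivAt_snd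
    have key := ((hasFDerivAt_const (b^4) q).add (h1.const_mul ((1/2)*b^2))).sub
      ((h2.mul h2).const_mul (1/16))
    have hfun : R = fun x : ℝ × ℝ => b ^ 4 + 1 / 2 * b ^ 2 * x.1 - 1 / 16 * (x.2 * x.2) := by
      rw [hR]; funext x; ring
    have hD : (0 + (1 / 2 * b ^ 2) • fst ℝ ℝ ℝ
        - ((1:ℝ) / 16) • (q.2 • snd ℝ ℝ ℝ + q.2 • snd ℝ ℝ ℝ))
        = ((1/2) * b^2) • (fst ℝ ℝ ℝ) + (-(1/8) * q.2) • (snd ℝ ℝ ℝ) := by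
      refine ContinuousLinearMap.ext fun v => ?_
      simp only [add_apply, sub_apply, smul_apply, coe_fst', coe_snd', zero_apply, smul_eq_mul]
      ring
    rw [hfun, ← hD]
    exact key
  have hUopen : IsOpen U := by
    rw [hU]
    exact isOpen_lt continuous_const (by rw [hR]; fun_prop)
  -- first derivatives of L
  have hLd : ∀ q : ℝ × ℝ, 0 < R q → HasFDerivAt L
      ((1 / (2 * Real.sqrt (R q))) •
        (((1/2) * b^2) • (fst ℝ ℝ ℝ) + (-(1/8) * q.2) • (snd ℝ ℝ ℝ))) q := by
    intro q hq
    have hs := Real.hasDerivAt_sqrt (ne_of_gt hq)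
    have := (hs.comp_hasFDerivAt q (hRd q)).sub_const (b^2)
    rw [hL]
    exact this
  have hLFval : ∀ q : ℝ × ℝ, 0 < R q → pderivF L q = b^2 / (4 * Real.sqrt (R q)) := by
    intro q hq
    have hsne : Real.sqrt (R q) ≠ 0 := ne_of_gt (Real.sqrt_pos.mpr hq)
    unfold pderivF
    rw [(hLd q hq).fderiv]
    simp only [smul_apply, add_apply, coe_fst', coe_snd', smul_eq_mul]
    field_simp
    try ring
    try tauto
    try simp
  have hLGval : ∀ q : ℝ × ℝ, 0 < R q → pderivG L q = -q.2 / (16 * Real.sqrt (R q)) := by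
    intro q hq
    have hsne : Real.sqrt (R q) ≠ 0 := ne_of_gt (Real.sqrt_pos.mpr hq)
    unfold pderivG
    rw [(hLd q hq).fderiv]
    simp only [smul_apply, add_apply, coe_fst', coe_snd', smul_eq_mul]
    field_simp
    try ring
    try tauto
    try simp
  -- derivative of inverse sqrt of R
  have hinvd : ∀ q : ℝ × ℝ, 0 < R q → HasFDerivAt (fun r => (Real.sqrt (R r))⁻¹)
      ((-(1 / (2 * Real.sqrt (R q))) / (Real.sqrt (R q)) ^ 2) •
        (((1/2) * b^2) • (fst ℝ ℝ ℝ) + (-(1/8) * q.2) • (snd ℝ ℝ ℝ))) q := by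
    intro q hq
    have hsne : Real.sqrt (R q) ≠ 0 := ne_of_gt (Real.sqrt_pos.mpr hq)
    exact ((Real.hasDerivAt_sqrt (ne_of_gt hq)).inv hsne).comp_hasFDerivAt q (hRd q)
  intro p hp
  have hp' : 0 < R p := by rw [hU] at hp; exact hp
  set s := Real.sqrt (R p) with hs_def
  have hs : 0 < s := Real.sqrt_pos.mpr hp'
  have hsne : s ≠ 0 := ne_of_gt hs
  have hs2 : s ^ 2 = R p := Real.sq_sqrt hp'.le
  -- second derivatives of the F-slot
  have hφd : HasFDerivAt (fun r => b^2 / (4 * Real.sqrt (R r)))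
      ((b^2/4) • ((-(1 / (2 * s)) / s ^ 2) •
        (((1/2) * b^2) • (fst ℝ ℝ ℝ) + (-(1/8) * p.2) • (snd ℝ ℝ ℝ)))) p := by
    have h := (hinvd p hp').const_mul (b^2/4)
    have hfun : (fun r => b^2/4 * (Real.sqrt (R r))⁻¹)
        = fun r => b^2 / (4 * Real.sqrt (R r)) := by
      funext r
      rw [eq_comm, div_eq_mul_inv, mul_inv]
      ring
    rw [hfun] at h
    exact h
  have hfevF : fderiv ℝ (pderivF L) p
      = fderiv ℝ (fun r => b^2 / (4 * Real.sqrt (R r))) p := by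
    apply Filter.EventuallyEq.fderiv_eq
    refine Filter.eventuallyEq_of_mem (hUopen.mem_nhds hp) fun r hr => ?_
    exact hLFval r (by rw [hU] at hr; exact hr)
  have hLFFval : LFF p = -(b^4) / (16 * s ^ 3) := by
    rw [hLFF, show pderivF (pderivF L) p = (fderiv ℝ (pderivF L) p) (1, 0) from rfl,
      hfevF, hφd.fderiv]
    simp only [smul_apply, add_apply, coe_fst', coe_snd', smul_eq_mul]
    field_simp
    try ring
    try tauto
    try simp
  have hLFGval : LFG p = b^2 * p.2 / (64 * s ^ 3) := by
    rw [hLFG, show pderivG (pderivF L) p = (fderiv ℝ (pderivF L) p) (0, 1) from rfl,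
      hfevF, hφd.fderiv]
    simp only [smul_apply, add_apply, coe_fst', coe_snd', smul_eq_mul]
    field_simp
    try ring
    try tauto
    try simp
  -- second derivatives of the G-slot
  have hψd : HasFDerivAt (fun r => -r.2 / (16 * Real.sqrt (R r)))
      ((-(1:ℝ)/16) • (p.2 • ((-(1 / (2 * s)) / s ^ 2) •
          (((1/2) * b^2) • (fst ℝ ℝ ℝ) + (-(1/8) * p.2) • (snd ℝ ℝ ℝ)))
        + s⁻¹ • (snd ℝ ℝ ℝ))) p := by
    have h := ((hasFDerivAt_snd (p := p)).mul (hinvd p hp')).const_mul (-(1:ℝ)/16)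
    have hfun : (fun r : ℝ × ℝ => -(1:ℝ)/16 * (r.2 * (Real.sqrt (R r))⁻¹))
        = fun r => -r.2 / (16 * Real.sqrt (R r)) := by
      funext r
      rw [eq_comm, div_eq_mul_inv, mul_inv]
      ring
    simp only [Pi.mul_apply] at h
    rw [hfun] at h
    exact h
  have hfevG : fderiv ℝ (pderivG L) p
      = fderiv ℝ (fun r => -r.2 / (16 * Real.sqrt (R r))) p := by
    apply Filter.EventuallyEq.fderiv_eq
    refine Filter.eventuallyEq_of_mem (hUopen.mem_nhds hp) fun r hr => ?_
    exact hLGval r (by rw [hU] at hr; exact hr)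
  have hLGGval : LGG p = -(1 / (16 * s)) - p.2 ^ 2 / (256 * s ^ 3) := by
    rw [hLGG, show pderivG (pderivG L) p = (fderiv ℝ (pderivG L) p) (0, 1) from rfl,
      hfevG, hψd.fderiv]
    simp only [smul_apply, add_apply, coe_fst', coe_snd', smul_eq_mul]
    field_simp
    try ring
    try tauto
    try simp
  have hLFval' : LF p = b^2 / (4 * s) := by rw [hLF]; exact hLFval p hp'
  have hRp : s ^ 2 = b ^ 4 + (1 / 2) * b ^ 2 * p.1 - (1 / 16) * p.2 ^ 2 := by
    rw [hs2, hR]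
  exact bi_alg b s p.1 p.2 (LF p) (LFF p) (LFG p) (LGG p) hsne hRp
    hLFval' hLFFval hLFGval hLGGval
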